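/- arXiv:1612.03136 — 4 statements merged into one kernel-verified Lean document; each statement's English description precedes it below -/
import Mathlib

section
/- Let f be an arithmetical function and N a positive integer. Define f' = f * μ (Dirichlet convolution with the Möbius function) and for r ≤ N set f̂(r) = Σ_{d ≤ N, r | d} f'(d)/d. Then for every n ≤ N, f(n) = Σ_{r ≤ N} f̂(r) · c_r(n). (Existence of the finite Ramanujan expansion.) -/
open Finset ArithmeticFunction

/-- `f' = f * μ`, the Dirichlet convolution of `f` with the Möbius function. -/
noncomputable def fprime (f : ℕ → ℂ) (d : ℕ) : ℂ :=
  ∑ e ∈ d.divisors, (moebius (d / e) : ℂ) * f e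

/-- The finite Ramanujan coefficient `f̂(r) = ∑_{d ≤ N, r | d} f'(d)/d`. -/
noncomputable def fhat (f : ℕ → ℂ) (N r : ℕ) : ℂ :=
  ∑ d ∈ (Finset.Icc 1 N).filter (fun d => r ∣ d), fprime f d / d

/-- The Ramanujan sum `c_r(n) = ∑_{e | gcd(n,r)} μ(r/e) e`. -/
def ramanujanC (r n : ℕ) : ℤ :=
  ∑ e ∈ (Nat.gcd n r).divisors, moebius (r / e) * e

open scoped ArithmeticFunction.Moebius

/-- Auxiliary arithmetic function `h(e) = e·[e ∣ n]`. -/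
def hFun (n : ℕ) : ArithmeticFunction ℤ :=
  ⟨fun e => if e ∣ n then (e : ℤ) else 0, by simp⟩

lemma ramanujanC_eq (n r : ℕ) (hr : r ≠ 0) :
    ramanujanC r n = ((μ : ArithmeticFunction ℤ) * hFun n) r := by
  rw [ramanujanC, mul_apply, Nat.sum_divisorsAntidiagonal' (f := fun a b => μ a * hFun n b)]
  have hdiv : (Nat.gcd n r).divisors = r.divisors.filter (· ∣ n) := by
    ext e
    simp only [Nat.mem_divisors, mem_filter, Nat.dvd_gcd_iff]
    constructor
    · rintro ⟨⟨h1, h2⟩, -⟩; exact ⟨⟨h2, hr⟩, h1⟩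
    · rintro ⟨⟨h2, -⟩, h1⟩; exact ⟨⟨h1, h2⟩, Nat.gcd_ne_zero_right hr⟩
  rw [hdiv, Finset.sum_filter]
  apply Finset.sum_congr rfl
  intro e _
  simp only [hFun, ArithmeticFunction.coe_mk]
  split <;> simp

lemma sum_ramanujanC (n d : ℕ) :
    ∑ r ∈ d.divisors, (ramanujanC r n : ℤ) = if d ∣ n then (d : ℤ) else 0 := by
  rcases eq_or_ne d 0 with rfl | hd
  · simp [hFun]
  have : ∑ r ∈ d.divisors, (ramanujanC r n : ℤ)
      = ∑ r ∈ d.divisors, ((μ : ArithmeticFunction ℤ) * hFun n) r := by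
    apply Finset.sum_congr rfl
    intro r hr
    exact ramanujanC_eq n r (Nat.pos_of_mem_divisors hr).ne'
  rw [this, ← coe_zeta_mul_apply, ← mul_assoc, coe_zeta_mul_moebius, one_mul]
  rfl

lemma moebius_inv_fprime (f : ℕ → ℂ) (n : ℕ) (hn : 0 < n) :
    ∑ d ∈ n.divisors, fprime f d = f n := by
  refine (sum_eq_iff_sum_smul_moebius_eq (f := fprime f) (g := f)).2 ?_ n hn
  intro m hm
  rw [Nat.sum_divisorsAntidiagonal (f := fun a b => μ a • f b), fprime,
    ← Nat.sum_div_divisors m (fun e => (μ (m / e) : ℂ) * f e)]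
  apply Finset.sum_congr rfl
  intro i hi
  rw [Nat.div_div_self (Nat.dvd_of_mem_divisors hi) hm.ne', zsmul_eq_mul]

/-- Existence of the finite Ramanujan expansion: for every `1 ≤ n ≤ N`,
`f(n) = ∑_{r ≤ N} f̂(r) c_r(n)`. -/
theorem finite_ramanujan_expansion (f : ℕ → ℂ) (N : ℕ) (hN : 0 < N)
    (n : ℕ) (hn1 : 1 ≤ n) (hnN : n ≤ N) :
    f n = ∑ r ∈ Finset.Icc 1 N, fhat f N r * (ramanujanC r n : ℂ) := by
  have swap : ∑ r ∈ Finset.Icc 1 N, fhat f N r * (ramanujanC r n : ℂ)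
      = ∑ d ∈ Finset.Icc 1 N, (fprime f d / d) *
          ∑ r ∈ d.divisors, (ramanujanC r n : ℂ) := by
    simp only [fhat, Finset.sum_mul, Finset.sum_filter]
    rw [Finset.sum_comm]
    apply Finset.sum_congr rfl
    intro d hd
    simp only [Finset.mem_Icc] at hd
    have hfil : (Finset.Icc 1 N).filter (· ∣ d) = d.divisors := by
      ext r
      simp only [Finset.mem_filter, Finset.mem_Icc, Nat.mem_divisors]
      constructor
      · rintro ⟨-, h⟩
        exact ⟨h, by omega⟩
      · rintro ⟨h, -⟩
        have hd0 : d ≠ 0 := by omega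
        have hr0 : r ≠ 0 := by rintro rfl; exact hd0 (Nat.zero_dvd.mp h)
        exact ⟨⟨by omega, le_trans (Nat.le_of_dvd (by omega) h) hd.2⟩, h⟩
    rw [Finset.mul_sum, ← hfil, Finset.sum_filter]
    apply Finset.sum_congr rfl
    intro r _
    split <;> simp
  rw [swap]
  have inner : ∀ d, ∑ r ∈ d.divisors, (ramanujanC r n : ℂ)
      = if d ∣ n then (d : ℂ) else 0 := by
    intro d
    have := sum_ramanujanC n d
    have : ((∑ r ∈ d.divisors, (ramanujanC r n : ℤ) : ℤ) : ℂ)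
        = ((if d ∣ n then (d : ℤ) else 0 : ℤ) : ℂ) := by rw [this]
    simpa [apply_ite (fun z : ℤ => (z : ℂ))] using this
  simp only [inner, mul_ite, mul_zero]
  rw [Finset.sum_ite, Finset.sum_const_zero, add_zero]
  have hfil : (Finset.Icc 1 N).filter (· ∣ n) = n.divisors := by
    ext d
    simp only [Finset.mem_filter, Finset.mem_Icc, Nat.mem_divisors]
    constructor
    · rintro ⟨-, h⟩; exact ⟨h, by omega⟩
    · rintro ⟨h, -⟩
      have hd0 : 0 < d := Nat.pos_of_dvd_of_pos h (by omega)
      exact ⟨⟨hd0, le_trans (Nat.le_of_dvd (by omega) h) hnN⟩, h⟩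
  rw [hfil]
  rw [← moebius_inv_fprime f n (by omega)]
  apply Finset.sum_congr rfl
  intro d hd
  have hd0 : (d : ℂ) ≠ 0 := by
    exact_mod_cast (Nat.pos_of_mem_divisors hd).ne'
  field_simp
end

section
/- Let N ≥ 2 and let f̂ : ℕ → ℂ satisfy |f̂(r)| ≤ C / (r · (log r)^α) for all r ≥ 2 and some constants C > 0, α > 1. Define f'(d) = d · Σ_{j ≤ N/d} μ(j) f̂(jd). Then there is a constant C' depending only on C and α such that |f'(d)| ≤ C' / (log d)^{α-1} for all 2 ≤ d ≤ N. -/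
open Finset ArithmeticFunction

section Aux
open Real

lemma rpow_key {a b β : ℝ} (ha : 0 < a) (hab : a ≤ b) (hβ : 0 < β) :
    β * (b - a) * b ^ (-β - 1) ≤ a ^ (-β) - b ^ (-β) := by
  have hb : 0 < b := ha.trans_le hab
  set x := (b - a) / b with hxdef
  have hx0 : 0 ≤ x := div_nonneg (by linarith) hb.le
  have hq0 : 0 < a / b := div_pos ha hb
  have hq : a / b = 1 - x := by rw [hxdef, sub_div, div_self hb.ne']; ring
  have h1 : (a / b) ^ β ≤ exp (β * (-x)) := by
    rw [rpow_def_of_pos hq0]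
    apply exp_le_exp.2
    have hlog : Real.log (a / b) ≤ -x := by
      have := Real.log_le_sub_one_of_pos hq0
      rw [hq] at this ⊢
      linarith
    rw [mul_comm]
    exact mul_le_mul_of_nonneg_left hlog hβ.le
  have h2 : 1 + β * x ≤ exp (β * x) := by
    have := Real.add_one_le_exp (β * x); linarith
  have hkey : (1 + β * x) * (a / b) ^ β ≤ 1 := by
    calc (1 + β * x) * (a / b) ^ β ≤ exp (β * x) * exp (β * (-x)) := by
          apply mul_le_mul h2 h1 (rpow_nonneg hq0.le β) (exp_pos _).le
      _ = 1 := by rw [← exp_add]; norm_num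
  have hpos : (0:ℝ) < (a / b) ^ β := rpow_pos_of_pos hq0 β
  have hle : 1 + β * x ≤ a ^ (-β) / b ^ (-β) := by
    rw [← div_rpow ha.le hb.le, rpow_neg hq0.le, ← one_div, le_div_iff₀ hpos]
    exact hkey
  have hbneg : (0:ℝ) < b ^ (-β) := rpow_pos_of_pos hb _
  have hle2 : (1 + β * x) * b ^ (-β) ≤ a ^ (-β) := by
    rw [← le_div_iff₀ hbneg]; exact hle
  have hsplit : b ^ (-β - 1) = b ^ (-β) / b := by
    rw [rpow_sub hb, rpow_one]
  have : β * (b - a) * b ^ (-β - 1) = β * x * b ^ (-β) := by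
    rw [hsplit, hxdef]; ring
  rw [this]
  nlinarith [hbneg]


lemma tail_sum {α : ℝ} (hα : 1 < α) {d : ℕ} (hd : 2 ≤ d) (K : ℕ) :
    ∑ j ∈ Finset.Icc (d+1) K, 1 / ((j:ℝ) * Real.log j ^ α)
      ≤ Real.log d ^ (1 - α) / (α - 1) := by
  have hβ : 0 < α - 1 := by linarith
  set g : ℕ → ℝ := fun m => Real.log m ^ (-(α - 1)) with hg
  have hgnn : ∀ m, 0 ≤ g m := fun m => rpow_nonneg (Real.log_natCast_nonneg m) _
  have hterm : ∀ j ∈ Finset.Icc (d+1) K,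
      1 / ((j:ℝ) * Real.log j ^ α) ≤ (g (j-1) - g j) / (α - 1) := by
    intro j hj
    obtain ⟨hj1, hj2⟩ := Finset.mem_Icc.mp hj
    have hj3 : 3 ≤ j := by omega
    have hcast : ((j-1 : ℕ) : ℝ) = (j:ℝ) - 1 := by
      have : (1:ℕ) ≤ j := by omega
      push_cast [this]; ring
    have hjR : (2:ℝ) ≤ (j:ℝ) - 1 := by
      have : (3:ℝ) ≤ (j:ℝ) := by exact_mod_cast hj3
      linarith
    have ha : 0 < Real.log ((j-1:ℕ):ℝ) := by
      rw [hcast]; exact Real.log_pos (by linarith)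
    have hab : Real.log ((j-1:ℕ):ℝ) ≤ Real.log j := by
      apply Real.log_le_log (by linarith [ha]; ) ?_
      · rw [hcast]; linarith
    have hb : 0 < Real.log (j:ℝ) := ha.trans_le hab
    have hgap : 1 / (j:ℝ) ≤ Real.log j - Real.log ((j-1:ℕ):ℝ) := by
      have hjpos : (0:ℝ) < (j:ℝ) := by positivity
      have h0 : (0:ℝ) < ((j:ℝ) - 1) / j := by positivity
      have := Real.log_le_sub_one_of_pos h0
      rw [Real.log_div (by linarith : ((j:ℝ)-1) ≠ 0) (by positivity)] at this
      rw [hcast]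
      have : Real.log ((j:ℝ)-1) - Real.log j ≤ ((j:ℝ)-1)/j - 1 := this
      have heq : ((j:ℝ)-1)/j - 1 = -(1/j) := by field_simp; ring
      linarith [heq ▸ this]
    have hkey := rpow_key ha hab hβ
    have hexp : -(α-1) - 1 = -α := by ring
    rw [hexp] at hkey
    have hbneg : Real.log (j:ℝ) ^ (-α) = (Real.log (j:ℝ) ^ α)⁻¹ := by
      rw [Real.rpow_neg hb.le]
    rw [le_div_iff₀ hβ]
    have h2 : (α-1) * (1/(j:ℝ)) * (Real.log j ^ α)⁻¹
        ≤ (α-1) * (Real.log j - Real.log ((j-1:ℕ):ℝ)) * (Real.log j ^ α)⁻¹ := by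
      have hinv : (0:ℝ) ≤ (Real.log (j:ℝ) ^ α)⁻¹ := by positivity
      apply mul_le_mul_of_nonneg_right _ hinv
      exact mul_le_mul_of_nonneg_left hgap hβ.le
    rw [hbneg] at hkey
    calc 1 / ((j:ℝ) * Real.log j ^ α) * (α - 1)
        = (α-1) * (1/(j:ℝ)) * (Real.log j ^ α)⁻¹ := by
          rw [one_div, one_div, mul_inv]; ring
      _ ≤ _ := h2.trans hkey
  calc ∑ j ∈ Finset.Icc (d+1) K, 1 / ((j:ℝ) * Real.log j ^ α)
      ≤ ∑ j ∈ Finset.Icc (d+1) K, (g (j-1) - g j) / (α - 1) :=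
        Finset.sum_le_sum hterm
    _ = (∑ j ∈ Finset.Icc (d+1) K, (g (j-1) - g j)) / (α - 1) := by
        rw [Finset.sum_div]
    _ ≤ g d / (α - 1) := by
        gcongr
        rw [← Finset.Ico_add_one_right_eq_Icc, Finset.sum_Ico_eq_sum_range]
        calc ∑ i ∈ Finset.range (K + 1 - (d+1)), (g ((d+1+i)-1) - g (d+1+i))
            = ∑ i ∈ Finset.range (K + 1 - (d+1)),
                ((fun i => g (d+i)) i - (fun i => g (d+i)) (i+1)) := by
              apply Finset.sum_congr rfl; intro i _
              have h1 : (d+1+i) - 1 = d + i := by omega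
              have h2 : d+1+i = d + (i+1) := by omega
              rw [h1, h2]
          _ = g (d+0) - g (d + (K+1-(d+1))) := Finset.sum_range_sub' _ _
          _ ≤ g d := by
              have := hgnn (d + (K+1-(d+1)))
              simp only [Nat.add_zero]
              linarith
    _ = Real.log d ^ (1 - α) / (α - 1) := by
        have hneg : -(α-1) = 1-α := by ring
        simp only [hg, hneg]

end Aux

/-- If `|fh(r)| ≤ C / (r (log r)^α)` for `r ≥ 2` (with `α > 1`), then
`f'(d) = d ∑_{j ≤ N/d} μ(j) fh(jd)` satisfies `|f'(d)| ≤ C' / (log d)^{α-1}`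
for `2 ≤ d ≤ N`, with `C'` depending only on `C` and `α`. -/

theorem fprime_bound_of_fhat_log_bound (C α : ℝ) (hC : 0 < C) (hα : 1 < α) :
    ∃ C' : ℝ, 0 < C' ∧ ∀ (N : ℕ), 2 ≤ N → ∀ fh : ℕ → ℂ,
      (∀ r : ℕ, 2 ≤ r → ‖fh r‖ ≤ C / (r * (Real.log r) ^ α)) →
      ∀ d : ℕ, 2 ≤ d → d ≤ N →
        ‖(d : ℂ) * ∑ j ∈ Finset.Icc 1 (N / d), (moebius j : ℂ) * fh (j * d)‖
          ≤ C' / (Real.log d) ^ (α - 1) := by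
  have hlog2 : 0 < Real.log 2 := Real.log_pos (by norm_num)
  have hβ : 0 < α - 1 := by linarith
  refine ⟨C * (1 + 1/Real.log 2 + 1/(α-1)), by positivity, ?_⟩
  intro N hN fh hfh d hd hdN
  set L := Real.log d with hLdef
  have hL2 : Real.log 2 ≤ L := Real.log_le_log (by norm_num) (by exact_mod_cast hd)
  have hLpos : 0 < L := lt_of_lt_of_le hlog2 hL2
  have hLP : (0:ℝ) < L ^ (α - 1) := Real.rpow_pos_of_pos hLpos _
  set K := N / d with hKdef
  set T : ℕ → ℝ := fun j => C / ((j:ℝ) * Real.log ((j*d : ℕ):ℝ) ^ α) with hTdef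
  have hdR : (2:ℝ) ≤ (d:ℝ) := by exact_mod_cast hd
  -- termwise norm bound
  have hterm : ∀ j ∈ Finset.Icc 1 K, ‖(moebius j : ℂ) * fh (j*d)‖
      ≤ C / (((j*d : ℕ):ℝ) * Real.log ((j*d : ℕ):ℝ) ^ α) := by
    intro j hj
    have hj1 : 1 ≤ j := (Finset.mem_Icc.mp hj).1
    have hjd2 : 2 ≤ j * d := le_trans hd (Nat.le_mul_of_pos_left d (by omega))
    have h1 := hfh (j*d) hjd2
    have hμ : ‖((moebius j : ℤ) : ℂ)‖ ≤ 1 := by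
      rw [Complex.norm_intCast]
      exact_mod_cast abs_moebius_le_one
    calc ‖(moebius j : ℂ) * fh (j*d)‖ = ‖((moebius j : ℤ) : ℂ)‖ * ‖fh (j*d)‖ := by
          rw [norm_mul]
      _ ≤ 1 * (C / (((j*d : ℕ):ℝ) * Real.log ((j*d : ℕ):ℝ) ^ α)) := by
          apply mul_le_mul hμ h1 (norm_nonneg _) (by norm_num)
      _ = _ := one_mul _
  -- positivity facts
  have hlogjd : ∀ j : ℕ, 1 ≤ j → 0 < Real.log ((j*d : ℕ):ℝ) := by
    intro j hj1
    apply Real.log_pos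
    have : (2:ℝ) ≤ ((j*d : ℕ):ℝ) := by
      have : 2 ≤ j * d := le_trans hd (Nat.le_mul_of_pos_left d (by omega))
      exact_mod_cast this
    linarith
  -- main chain step 1
  have step1 : ‖(d : ℂ) * ∑ j ∈ Finset.Icc 1 K, (moebius j : ℂ) * fh (j * d)‖
      ≤ ∑ j ∈ Finset.Icc 1 K, T j := by
    rw [norm_mul, Complex.norm_natCast]
    calc (d:ℝ) * ‖∑ j ∈ Finset.Icc 1 K, (moebius j : ℂ) * fh (j * d)‖
        ≤ (d:ℝ) * ∑ j ∈ Finset.Icc 1 K, C / (((j*d : ℕ):ℝ) * Real.log ((j*d : ℕ):ℝ) ^ α) := by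
          apply mul_le_mul_of_nonneg_left _ (Nat.cast_nonneg d)
          exact (norm_sum_le _ _).trans (Finset.sum_le_sum hterm)
      _ = ∑ j ∈ Finset.Icc 1 K, T j := by
          rw [Finset.mul_sum]
          apply Finset.sum_congr rfl
          intro j hj
          have hj1 : 1 ≤ j := (Finset.mem_Icc.mp hj).1
          have hjR : (1:ℝ) ≤ (j:ℝ) := by exact_mod_cast hj1
          have hX : (0:ℝ) < Real.log ((j*d : ℕ):ℝ) ^ α :=
            Real.rpow_pos_of_pos (hlogjd j hj1) _
          have hcast : ((j*d : ℕ):ℝ) = (j:ℝ) * (d:ℝ) := by push_cast; ring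
          have hd0 : (d:ℝ) ≠ 0 := by positivity
          have hj0 : (j:ℝ) ≠ 0 := by positivity
          have hX0 : Real.log ((j*d : ℕ):ℝ) ^ α ≠ 0 := ne_of_gt hX
          simp only [hTdef]
          rw [hcast] at hX0 ⊢
          field_simp
  -- split
  have hsplit : ∑ j ∈ Finset.Icc 1 K, T j
      = ∑ j ∈ (Finset.Icc 1 K).filter (fun j => j ≤ d), T j
        + ∑ j ∈ (Finset.Icc 1 K).filter (fun j => ¬ j ≤ d), T j :=
    (Finset.sum_filter_add_sum_filter_not _ _ _).symm
  have hTnonneg : ∀ j, 0 ≤ T j := by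
    intro j
    apply div_nonneg hC.le
    rcases Nat.eq_zero_or_pos j with h | h
    · simp [h]
    · exact mul_nonneg (Nat.cast_nonneg _) (Real.rpow_nonneg (Real.log_natCast_nonneg _) _)
  -- Part 1
  have hpart1 : ∑ j ∈ (Finset.Icc 1 K).filter (fun j => j ≤ d), T j
      ≤ C * (1 + 1/Real.log 2) / L ^ (α - 1) := by
    have hbound : ∀ j ∈ (Finset.Icc 1 K).filter (fun j => j ≤ d),
        T j ≤ C / L ^ α * (j:ℝ)⁻¹ := by
      intro j hj
      rw [Finset.mem_filter, Finset.mem_Icc] at hj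
      have hj1 : 1 ≤ j := hj.1.1
      have hjR : (1:ℝ) ≤ (j:ℝ) := by exact_mod_cast hj1
      have hlogmono : L ≤ Real.log ((j*d:ℕ):ℝ) := by
        apply Real.log_le_log (by positivity)
        have : d ≤ j * d := Nat.le_mul_of_pos_left d (by omega)
        exact_mod_cast this
      have hLα : L ^ α ≤ Real.log ((j*d:ℕ):ℝ) ^ α :=
        Real.rpow_le_rpow hLpos.le hlogmono (by linarith)
      have h1 : T j ≤ C / ((j:ℝ) * L ^ α) := by
        simp only [hTdef]
        gcongr
        all_goals first
          | exact hC.le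
          | positivity
          | exact hLα
          | exact hlogmono
          | exact hLpos.le
      calc T j ≤ C / ((j:ℝ) * L ^ α) := h1
        _ = C / L ^ α * (j:ℝ)⁻¹ := by
            rw [mul_comm, ← div_div, div_eq_mul_inv]
    calc ∑ j ∈ (Finset.Icc 1 K).filter (fun j => j ≤ d), T j
        ≤ ∑ j ∈ (Finset.Icc 1 K).filter (fun j => j ≤ d), C / L ^ α * (j:ℝ)⁻¹ :=
          Finset.sum_le_sum hbound
      _ ≤ ∑ j ∈ Finset.Icc 1 d, C / L ^ α * (j:ℝ)⁻¹ := by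
          apply Finset.sum_le_sum_of_subset_of_nonneg
          · intro j hj
            rw [Finset.mem_filter, Finset.mem_Icc] at hj
            exact Finset.mem_Icc.mpr ⟨hj.1.1, hj.2⟩
          · intro j _ _; positivity
      _ = C / L ^ α * ∑ j ∈ Finset.Icc 1 d, (j:ℝ)⁻¹ := by rw [Finset.mul_sum]
      _ ≤ C / L ^ α * (1 + L) := by
          apply mul_le_mul_of_nonneg_left _ (by positivity)
          have h1 := harmonic_le_one_add_log d
          rw [harmonic_eq_sum_Icc] at h1
          push_cast at h1
          exact h1
      _ ≤ C * (1 + 1/Real.log 2) / L ^ (α - 1) := by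
          have hLsplit : L ^ α = L ^ (α-1) * L := by
            calc L ^ α = L ^ ((α-1)+1) := by ring_nf
              _ = L ^ (α-1) * L := by rw [Real.rpow_add hLpos, Real.rpow_one]
          have h1 : 1 + L ≤ (1 + 1/Real.log 2) * L := by
            have h2 : 1 ≤ 1/Real.log 2 * L := by
              rw [div_mul_eq_mul_div, one_mul, le_div_iff₀ hlog2, one_mul]
              exact hL2
            nlinarith
          rw [div_mul_eq_mul_div, div_le_div_iff₀ (by positivity) hLP, hLsplit]
          calc C * (1+L) * L^(α-1) = (C*L^(α-1)) * (1+L) := by ring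
            _ ≤ (C*L^(α-1)) * ((1+1/Real.log 2)*L) :=
                mul_le_mul_of_nonneg_left h1 (by positivity)
            _ = C * (1+1/Real.log 2) * (L^(α-1)*L) := by ring
  -- Part 2
  have hpart2 : ∑ j ∈ (Finset.Icc 1 K).filter (fun j => ¬ j ≤ d), T j
      ≤ C / (α-1) / L ^ (α - 1) := by
    have hbound : ∀ j ∈ (Finset.Icc 1 K).filter (fun j => ¬ j ≤ d),
        T j ≤ C * (1 / ((j:ℝ) * Real.log (j:ℝ) ^ α)) := by
      intro j hj
      rw [Finset.mem_filter, Finset.mem_Icc] at hj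
      have hj3 : 3 ≤ j := by omega
      have hjR : (3:ℝ) ≤ (j:ℝ) := by exact_mod_cast hj3
      have hlogj : 0 < Real.log (j:ℝ) := Real.log_pos (by linarith)
      have hlogmono : Real.log (j:ℝ) ≤ Real.log ((j*d:ℕ):ℝ) := by
        apply Real.log_le_log (by linarith)
        have : j ≤ j * d := Nat.le_mul_of_pos_right j (by omega)
        exact_mod_cast this
      have hLα : Real.log (j:ℝ) ^ α ≤ Real.log ((j*d:ℕ):ℝ) ^ α :=
        Real.rpow_le_rpow hlogj.le hlogmono (by linarith)
      rw [mul_one_div]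
      simp only [hTdef]
      gcongr
      all_goals first
        | exact hC.le
        | positivity
        | exact hLα
        | exact hlogmono
        | exact hlogj.le
    calc ∑ j ∈ (Finset.Icc 1 K).filter (fun j => ¬ j ≤ d), T j
        ≤ ∑ j ∈ (Finset.Icc 1 K).filter (fun j => ¬ j ≤ d),
            C * (1 / ((j:ℝ) * Real.log (j:ℝ) ^ α)) := Finset.sum_le_sum hbound
      _ ≤ ∑ j ∈ Finset.Icc (d+1) K, C * (1 / ((j:ℝ) * Real.log (j:ℝ) ^ α)) := by
          apply Finset.sum_le_sum_of_subset_of_nonneg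
          · intro j hj
            rw [Finset.mem_filter, Finset.mem_Icc] at hj
            exact Finset.mem_Icc.mpr ⟨by omega, hj.1.2⟩
          · intro j _ _
            apply mul_nonneg hC.le
            apply div_nonneg (by norm_num)
            exact mul_nonneg (Nat.cast_nonneg _)
              (Real.rpow_nonneg (Real.log_natCast_nonneg _) _)
      _ = C * ∑ j ∈ Finset.Icc (d+1) K, 1 / ((j:ℝ) * Real.log (j:ℝ) ^ α) := by
          rw [Finset.mul_sum]
      _ ≤ C * (L ^ (1-α) / (α-1)) :=
          mul_le_mul_of_nonneg_left (tail_sum hα hd K) hC.le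
      _ = C / (α-1) / L ^ (α-1) := by
          rw [show (1-α) = -(α-1) by ring, Real.rpow_neg hLpos.le]
          field_simp
  -- combine
  calc ‖(d : ℂ) * ∑ j ∈ Finset.Icc 1 K, (moebius j : ℂ) * fh (j * d)‖
      ≤ ∑ j ∈ Finset.Icc 1 K, T j := step1
    _ = _ + _ := hsplit
    _ ≤ C * (1 + 1/Real.log 2) / L ^ (α - 1) + C / (α-1) / L ^ (α - 1) :=
        add_le_add hpart1 hpart2
    _ = C * (1 + 1/Real.log 2 + 1/(α-1)) / L ^ (α - 1) := by
        rw [← add_div]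
        congr 1
        ring
end

section
/- Let N ≥ 2 and let f' : ℕ → ℂ be supported on [1, N] with |f'(d)| ≤ C / (log d)^β for all d ≥ 2, for constants C > 0 and β > 1. Define f̂(r) = Σ_{d ≤ N, r | d} f'(d)/d. Then there is a constant C' depending only on C and β such that |f̂(r)| ≤ C' / (r · (log r)^{β-1}) for all 2 ≤ r ≤ N. -/
open Finset ArithmeticFunction

private lemma log_rpow_hasDeriv (β : ℝ) {x : ℝ} (hx : 1 < x) :
    HasDerivAt (fun y => Real.log y ^ (1 - β))
      (x⁻¹ * (1 - β) * Real.log x ^ (1 - β - 1)) x := by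
  have hx0 : x ≠ 0 := by positivity
  have hlog : Real.log x ≠ 0 := ne_of_gt (Real.log_pos hx)
  exact (Real.hasDerivAt_log hx0).rpow_const (Or.inl hlog)

private lemma step_ineq (β : ℝ) (hβ : 1 < β) {n : ℝ} (hn : 2 ≤ n) :
    (β - 1) / ((n + 1) * Real.log (n + 1) ^ β)
      ≤ Real.log n ^ (1 - β) - Real.log (n + 1) ^ (1 - β) := by
  have hn1 : (1 : ℝ) < n := by linarith
  have hlt : n < n + 1 := by linarith
  obtain ⟨c, hc, hceq⟩ := exists_hasDerivAt_eq_slope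
    (fun y => Real.log y ^ (1 - β))
    (fun y => y⁻¹ * (1 - β) * Real.log y ^ (1 - β - 1)) hlt
    (fun x hx => by
      have h1x : 1 < x := lt_of_lt_of_le hn1 hx.1
      exact (log_rpow_hasDeriv β h1x).continuousAt.continuousWithinAt)
    (fun x hx => log_rpow_hasDeriv β (hn1.trans hx.1))
  have hc1 : 1 < c := hn1.trans hc.1
  have hc0 : 0 < c := by linarith
  have hlogc : 0 < Real.log c := Real.log_pos hc1
  have hlogn1 : 0 < Real.log (n + 1) := Real.log_pos (by linarith)
  -- rewrite the derivative value
  have hpow : Real.log c ^ (1 - β - 1) = (Real.log c ^ β)⁻¹ := by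
    rw [show (1 - β - 1 : ℝ) = -β by ring, Real.rpow_neg hlogc.le]
  have hslope : Real.log n ^ (1 - β) - Real.log (n + 1) ^ (1 - β)
      = (β - 1) / (c * Real.log c ^ β) := by
    have h := hceq
    rw [show n + 1 - n = (1 : ℝ) by ring, div_one, hpow] at h
    have h2 : Real.log n ^ (1 - β) - Real.log (n + 1) ^ (1 - β)
        = -(c⁻¹ * (1 - β) * (Real.log c ^ β)⁻¹) := by linarith
    rw [h2]
    have hX : Real.log c ^ β ≠ 0 := ne_of_gt (Real.rpow_pos_of_pos hlogc β)
    field_simp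
    ring
  rw [hslope]
  have hcltn1 : c ≤ n + 1 := hc.2.le
  have hlogle : Real.log c ≤ Real.log (n + 1) := Real.log_le_log hc0 hcltn1
  have hpowle : Real.log c ^ β ≤ Real.log (n + 1) ^ β :=
    Real.rpow_le_rpow hlogc.le hlogle (by linarith)
  have hden : c * Real.log c ^ β ≤ (n + 1) * Real.log (n + 1) ^ β := by
    have h1 : 0 < Real.log c ^ β := Real.rpow_pos_of_pos hlogc β
    nlinarith
  have hdpos : 0 < c * Real.log c ^ β :=
    mul_pos hc0 (Real.rpow_pos_of_pos hlogc β)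
  exact div_le_div_of_nonneg_left (by linarith) hdpos hden

private lemma tail_sum_bound (β : ℝ) (hβ : 1 < β) (r : ℕ) (hr : 2 ≤ r) (M : ℕ) :
    ∑ n ∈ Finset.Icc (r + 1) M, 1 / ((n : ℝ) * Real.log n ^ β)
      ≤ Real.log r ^ (1 - β) / (β - 1) := by
  have hβ1 : (0 : ℝ) < β - 1 := by linarith
  have hr1R : (1 : ℝ) ≤ (r : ℝ) := by
    have : (2 : ℝ) ≤ (r : ℝ) := by exact_mod_cast hr
    linarith
  have hgr : (0 : ℝ) ≤ Real.log r ^ (1 - β) :=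
    Real.rpow_nonneg (Real.log_nonneg hr1R) _
  have key : ∀ M : ℕ, r ≤ M →
      (β - 1) * ∑ n ∈ Finset.Icc (r + 1) M, 1 / ((n : ℝ) * Real.log n ^ β)
        ≤ Real.log r ^ (1 - β) - Real.log M ^ (1 - β) := by
    intro M hM
    induction M, hM using Nat.le_induction with
    | base => simp [Finset.Icc_eq_empty_of_lt (Nat.lt_succ_self r)]
    | succ M hM ih =>
      rw [Finset.sum_Icc_succ_top (by omega)]
      have hMn : (2 : ℝ) ≤ (M : ℝ) := by
        have : 2 ≤ M := le_trans hr hM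
        exact_mod_cast this
      have hstep := step_ineq β hβ hMn
      have heq : (β - 1) * (1 / (((M : ℝ) + 1) * Real.log ((M : ℝ) + 1) ^ β))
          = (β - 1) / (((M : ℝ) + 1) * Real.log ((M : ℝ) + 1) ^ β) := by ring
      push_cast
      push_cast at ih
      rw [mul_add, heq]
      linarith
  rcases le_or_gt M r with h | h
  · have : Finset.Icc (r + 1) M = ∅ := Finset.Icc_eq_empty_of_lt (by omega)
    rw [this]
    simp only [Finset.sum_empty]
    positivity
  · have hkey := key M h.le
    have hM2 : (1 : ℝ) ≤ (M : ℝ) := by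
      have : (2 : ℝ) ≤ (M : ℝ) := by
        have : 2 ≤ M := by omega
        exact_mod_cast this
      linarith
    have hgM : (0 : ℝ) ≤ Real.log M ^ (1 - β) :=
      Real.rpow_nonneg (Real.log_nonneg hM2) _
    rw [le_div_iff₀ hβ1]
    nlinarith

/-- If `f'` is supported on `[1, N]` with `|f'(d)| ≤ C / (log d)^β` for `d ≥ 2`
(with `β > 1`), then `f̂(r) = ∑_{d ≤ N, r | d} f'(d)/d` satisfies
`|f̂(r)| ≤ C' / (r (log r)^{β-1})` for `2 ≤ r ≤ N`, with `C'` depending only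
on `C` and `β`. -/
theorem fhat_bound_of_fprime_log_bound (C β : ℝ) (hC : 0 < C) (hβ : 1 < β) :
    ∃ C' : ℝ, 0 < C' ∧ ∀ (N : ℕ), 2 ≤ N → ∀ f' : ℕ → ℂ,
      (∀ d : ℕ, (d = 0 ∨ N < d) → f' d = 0) →
      (∀ d : ℕ, 2 ≤ d → ‖f' d‖ ≤ C / (Real.log d) ^ β) →
      ∀ r : ℕ, 2 ≤ r → r ≤ N →
        ‖∑ d ∈ (Finset.Icc 1 N).filter (fun d => r ∣ d), f' d / d‖
          ≤ C' / (r * (Real.log r) ^ (β - 1)) := by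
  refine ⟨C * (1 + (Real.log 2)⁻¹) + C / (β - 1), ?_, ?_⟩
  · have h2 : 0 < Real.log 2 := Real.log_pos (by norm_num)
    have : 0 < C / (β - 1) := div_pos hC (by linarith)
    positivity
  intro N hN f' hsupp hbound r hr hrN
  set M := N / r with hM
  have hr0 : 0 < r := by omega
  have hrR : (2 : ℝ) ≤ (r : ℝ) := by exact_mod_cast hr
  have hL : 0 < Real.log r := Real.log_pos (by linarith)
  have hL2 : Real.log 2 ≤ Real.log r := Real.log_le_log (by norm_num) hrR
  have hlog2 : 0 < Real.log 2 := Real.log_pos (by norm_num)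
  -- reindex the sum
  have hreindex : ∑ d ∈ (Finset.Icc 1 N).filter (fun d => r ∣ d), f' d / d
      = ∑ n ∈ Finset.Icc 1 M, f' (r * n) / (r * n) := by
    refine Finset.sum_nbij' (fun d => d / r) (fun n => r * n) ?_ ?_ ?_ ?_ ?_
    · intro d hd
      simp only [Finset.mem_filter, Finset.mem_Icc] at hd
      obtain ⟨⟨hd1, hdN⟩, hdvd⟩ := hd
      simp only [Finset.mem_Icc]
      constructor
      · rw [Nat.one_le_div_iff hr0]
        exact Nat.le_of_dvd (by omega) hdvd
      · exact Nat.div_le_div_right hdN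
    · intro n hn
      simp only [Finset.mem_Icc] at hn
      simp only [Finset.mem_filter, Finset.mem_Icc]
      refine ⟨⟨Nat.one_le_iff_ne_zero.mpr (Nat.mul_ne_zero (by omega) (by omega)), ?_⟩, Dvd.intro n rfl⟩
      calc r * n ≤ r * (N / r) := Nat.mul_le_mul_left r hn.2
        _ ≤ N := Nat.mul_div_le N r
    · intro d hd
      simp only [Finset.mem_filter] at hd
      exact Nat.mul_div_cancel' hd.2
    · intro n _
      exact Nat.mul_div_cancel_left n hr0
    · intro d hd
      simp only [Finset.mem_filter] at hd
      have : ((r : ℂ)) * ((d / r : ℕ) : ℂ) = (d : ℂ) := by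
        rw [← Nat.cast_mul, Nat.mul_div_cancel' hd.2]
      rw [this, Nat.mul_div_cancel' hd.2]
  rw [hreindex]
  -- bound by norms
  have hnorm : ‖∑ n ∈ Finset.Icc 1 M, f' (r * n) / (r * n)‖
      ≤ ∑ n ∈ Finset.Icc 1 M, C / ((r * n : ℝ) * Real.log (r * n : ℕ) ^ β) := by
    refine (norm_sum_le _ _).trans (Finset.sum_le_sum ?_)
    intro n hn
    simp only [Finset.mem_Icc] at hn
    have hn1 : (1 : ℝ) ≤ (n : ℝ) := by exact_mod_cast hn.1
    have hrn2 : 2 ≤ r * n := le_trans hr (Nat.le_mul_of_pos_right r (by omega))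
    have hb := hbound (r * n) hrn2
    have h2R : (2 : ℝ) ≤ ((r * n : ℕ) : ℝ) := by exact_mod_cast hrn2
    push_cast at hb h2R ⊢
    have hlogrn : 0 < Real.log ((r : ℝ) * n) := Real.log_pos (by linarith)
    have hP : 0 < Real.log ((r : ℝ) * n) ^ β := Real.rpow_pos_of_pos hlogrn β
    have hRN : (0 : ℝ) < (r : ℝ) * n := by linarith
    rw [norm_div, show ‖((r : ℂ)) * ((n : ℕ) : ℂ)‖ = (r : ℝ) * n from by
      rw [norm_mul, Complex.norm_natCast, Complex.norm_natCast]]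
    rw [div_le_div_iff₀ hRN (mul_pos hRN hP)]
    calc ‖f' (r * n)‖ * ((r : ℝ) * n * Real.log ((r : ℝ) * n) ^ β)
        ≤ C / Real.log ((r : ℝ) * n) ^ β * ((r : ℝ) * n * Real.log ((r : ℝ) * n) ^ β) :=
          mul_le_mul_of_nonneg_right hb (by positivity)
      _ = C * ((r : ℝ) * n) := by
          field_simp
          try ring
  refine hnorm.trans ?_
  -- split the sum
  have hsplit : ∑ n ∈ Finset.Icc 1 M, C / ((r * n : ℝ) * Real.log (r * n : ℕ) ^ β)
      ≤ (∑ n ∈ Finset.Icc 1 r, C / ((r * n : ℝ) * Real.log (r * n : ℕ) ^ β))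
        + ∑ n ∈ Finset.Icc (r + 1) M, C / ((r * n : ℝ) * Real.log (r * n : ℕ) ^ β) := by
    rw [← Finset.sum_union (by
      apply Finset.disjoint_left.mpr
      intro a ha hb
      simp only [Finset.mem_Icc] at ha hb
      omega)]
    apply Finset.sum_le_sum_of_subset_of_nonneg
    · intro n hn
      simp only [Finset.mem_Icc, Finset.mem_union] at *
      omega
    · intro n hn _
      have h1 : (1 : ℕ) ≤ n := by
        simp only [Finset.mem_union, Finset.mem_Icc] at hn
        omega
      have hrn2 : 2 ≤ r * n := le_trans hr (Nat.le_mul_of_pos_right r (by omega))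
      have h2R : (2 : ℝ) ≤ ((r * n : ℕ) : ℝ) := by exact_mod_cast hrn2
      push_cast at h2R
      have hlogrn : 0 < Real.log ((r : ℝ) * n) := Real.log_pos (by linarith)
      have hRN : (0 : ℝ) < (r : ℝ) * n := by linarith
      have hP : 0 < Real.log ((r : ℝ) * n) ^ β := Real.rpow_pos_of_pos hlogrn β
      have : Real.log ((r * n : ℕ) : ℝ) = Real.log ((r : ℝ) * n) := by push_cast; rfl
      rw [this]
      positivity
  refine hsplit.trans ?_
  -- Part A
  have hA : ∑ n ∈ Finset.Icc 1 r, C / ((r * n : ℝ) * Real.log (r * n : ℕ) ^ β)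
      ≤ C * (1 + Real.log r) / ((r : ℝ) * Real.log r ^ β) := by
    have h1 : ∀ n ∈ Finset.Icc 1 r, C / ((r * n : ℝ) * Real.log (r * n : ℕ) ^ β)
        ≤ C / ((r : ℝ) * Real.log r ^ β) * (1 / n) := by
      intro n hn
      simp only [Finset.mem_Icc] at hn
      have hn1 : (1:ℝ) ≤ (n:ℝ) := by exact_mod_cast hn.1
      have hlogle : Real.log r ≤ Real.log (r * n : ℕ) := by
        apply Real.log_le_log (by linarith)
        push_cast
        nlinarith
      have hpowle : Real.log r ^ β ≤ Real.log (r * n : ℕ) ^ β :=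
        Real.rpow_le_rpow hL.le hlogle (by linarith)
      have hLpow : 0 < Real.log r ^ β := Real.rpow_pos_of_pos hL β
      rw [div_mul_eq_mul_div, mul_one_div, div_div]
      push_cast at hpowle ⊢
      apply div_le_div_of_nonneg_left hC.le
      · positivity
      · nlinarith [mul_le_mul_of_nonneg_left hpowle
          (show (0:ℝ) ≤ (r:ℝ) * n by positivity)]
    calc ∑ n ∈ Finset.Icc 1 r, C / ((r * n : ℝ) * Real.log (r * n : ℕ) ^ β)
        ≤ ∑ n ∈ Finset.Icc 1 r, C / ((r : ℝ) * Real.log r ^ β) * (1 / n) :=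
          Finset.sum_le_sum h1
      _ = C / ((r : ℝ) * Real.log r ^ β) * ∑ n ∈ Finset.Icc 1 r, (1 / n : ℝ) := by
          rw [Finset.mul_sum]
      _ ≤ C / ((r : ℝ) * Real.log r ^ β) * (1 + Real.log r) := by
          apply mul_le_mul_of_nonneg_left _ (by positivity)
          have := harmonic_le_one_add_log r
          rw [harmonic_eq_sum_Icc] at this
          push_cast at this ⊢
          simpa using this
      _ = _ := by ring
  -- Part B
  have hB : ∑ n ∈ Finset.Icc (r + 1) M, C / ((r * n : ℝ) * Real.log (r * n : ℕ) ^ β)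
      ≤ C / r * (Real.log r ^ (1 - β) / (β - 1)) := by
    have h1 : ∀ n ∈ Finset.Icc (r + 1) M, C / ((r * n : ℝ) * Real.log (r * n : ℕ) ^ β)
        ≤ C / r * (1 / ((n : ℝ) * Real.log n ^ β)) := by
      intro n hn
      simp only [Finset.mem_Icc] at hn
      have hn3 : 3 ≤ n := by omega
      have hn3R : (3:ℝ) ≤ (n:ℝ) := by exact_mod_cast hn3
      have hlogn : 0 < Real.log n := Real.log_pos (by linarith)
      have hlogle : Real.log n ≤ Real.log (r * n : ℕ) := by
        apply Real.log_le_log (by linarith)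
        push_cast
        nlinarith
      have hpowle : Real.log n ^ β ≤ Real.log (r * n : ℕ) ^ β :=
        Real.rpow_le_rpow hlogn.le hlogle (by linarith)
      have hnpow : 0 < Real.log n ^ β := Real.rpow_pos_of_pos hlogn β
      rw [div_mul_eq_mul_div, mul_one_div, div_div]
      push_cast at hpowle ⊢
      apply div_le_div_of_nonneg_left hC.le
      · positivity
      · nlinarith [mul_le_mul_of_nonneg_left hpowle
          (show (0:ℝ) ≤ (r:ℝ) * n by positivity)]
    calc ∑ n ∈ Finset.Icc (r + 1) M, C / ((r * n : ℝ) * Real.log (r * n : ℕ) ^ β)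
        ≤ ∑ n ∈ Finset.Icc (r + 1) M, C / r * (1 / ((n : ℝ) * Real.log n ^ β)) :=
          Finset.sum_le_sum h1
      _ = C / r * ∑ n ∈ Finset.Icc (r + 1) M, (1 / ((n : ℝ) * Real.log n ^ β)) := by
          rw [Finset.mul_sum]
      _ ≤ _ := by
          apply mul_le_mul_of_nonneg_left (tail_sum_bound β hβ r hr M) (by positivity)
  refine (add_le_add hA hB).trans ?_
  -- final arithmetic
  have hLpow : 0 < Real.log r ^ β := Real.rpow_pos_of_pos hL β
  have h1β : Real.log r ^ (1 - β) = Real.log r / Real.log r ^ β := by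
    rw [Real.rpow_sub hL, Real.rpow_one]
  have hβ1 : Real.log r ^ (β - 1) = Real.log r ^ β / Real.log r := by
    rw [Real.rpow_sub hL, Real.rpow_one]
  rw [h1β, hβ1]
  have hrpos : (0:ℝ) < r := by linarith
  rw [le_div_iff₀ (mul_pos hrpos (div_pos hLpow hL))]
  have hkey : 1 + Real.log r ≤ (1 + (Real.log 2)⁻¹) * Real.log r := by
    have : 1 ≤ Real.log r / Real.log 2 := (one_le_div hlog2).mpr hL2
    calc 1 + Real.log r ≤ Real.log r / Real.log 2 + Real.log r := by linarith
      _ = (1 + (Real.log 2)⁻¹) * Real.log r := by field_simp; ring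
  have hβpos : (0:ℝ) < β - 1 := by linarith
  have e1 : C * (1 + Real.log r) / ((r:ℝ) * Real.log r ^ β) * ((r:ℝ) * (Real.log r ^ β / Real.log r))
      = C * (1 + Real.log r) / Real.log r := by
    field_simp
    try ring
  have e2 : C / (r:ℝ) * (Real.log r / Real.log r ^ β / (β - 1)) * ((r:ℝ) * (Real.log r ^ β / Real.log r))
      = C / (β - 1) := by
    field_simp
    try ring
  rw [add_mul, e1, e2]
  have : C * (1 + Real.log r) / Real.log r ≤ C * (1 + (Real.log 2)⁻¹) := by
    rw [div_le_iff₀ hL]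
    calc C * (1 + Real.log r) ≤ C * ((1 + (Real.log 2)⁻¹) * Real.log r) :=
        mul_le_mul_of_nonneg_left hkey hC.le
      _ = C * (1 + (Real.log 2)⁻¹) * Real.log r := by ring
  linarith
end

section
/- Let f, g : ℕ → ℂ, N a positive integer, h a non-negative integer, and f' = f*μ, g' = g*μ. Then Σ_{n ≤ N} f(n) g(n+h) = Σ_{l | h} Σ_{d ≤ N/l} f'(ld) Σ_{q ≤ (N+h)/l, gcd(q,d)=1} g'(lq) · #{m ≤ N/(ld) : m ≡ d^{-1}·(−h/l) (mod q)}. -/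
open Finset ArithmeticFunction

lemma sum_fprime (f : ℕ → ℂ) {n : ℕ} (hn : 0 < n) :
    ∑ D ∈ n.divisors, fprime f D = f n := by
  refine ArithmeticFunction.sum_eq_iff_sum_mul_moebius_eq.mpr (fun m hm => ?_) n hn
  rw [Nat.sum_divisorsAntidiagonal' (f := fun a b => (moebius a : ℂ) * f b)]
  rfl

lemma divisors_eq_filter {n M : ℕ} (hn : 0 < n) (hnM : n ≤ M) :
    n.divisors = (Finset.Icc 1 M).filter (· ∣ n) := by
  ext a
  simp only [Nat.mem_divisors, Finset.mem_filter, Finset.mem_Icc]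
  constructor
  · rintro ⟨ha, -⟩
    exact ⟨⟨Nat.pos_of_dvd_of_pos ha hn, le_trans (Nat.le_of_dvd hn ha) hnM⟩, ha⟩
  · rintro ⟨-, ha⟩
    exact ⟨ha, hn.ne'⟩

lemma Icc_one_eq_filter {K M : ℕ} (hKM : K ≤ M) :
    Finset.Icc 1 K = (Finset.Icc 1 M).filter (· ≤ K) := by
  ext a
  simp only [Finset.mem_Icc, Finset.mem_filter]
  omega

lemma cong_iff_dvd {d q m k : ℕ} (hq : 0 < q) (hco : Nat.Coprime q d) :
    ((m : ZMod q) = ((d : ZMod q))⁻¹ * (-(k : ZMod q))) ↔ q ∣ d * m + k := by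
  haveI : NeZero q := ⟨hq.ne'⟩
  have hu : IsUnit (d : ZMod q) := (ZMod.isUnit_iff_coprime d q).mpr hco.symm
  have key : ((m : ZMod q) = (d : ZMod q)⁻¹ * (-(k : ZMod q))) ↔
      ((d : ZMod q) * (m : ZMod q) = -(k : ZMod q)) := by
    constructor
    · intro hmm; rw [hmm, ← mul_assoc, ZMod.mul_inv_of_unit _ hu, one_mul]
    · intro hmm
      have := congrArg (fun x => (d : ZMod q)⁻¹ * x) hmm
      simpa [← mul_assoc, ZMod.inv_mul_of_unit _ hu] using this
  rw [key, eq_neg_iff_add_eq_zero, ← Nat.cast_mul, ← Nat.cast_add,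
    ZMod.natCast_eq_zero_iff]

/-- Reorganizing the opened shifted convolution sum by `l = gcd(d, q)`:
`∑_{n ≤ N} f(n) g(n+h) = ∑_{l | h} ∑_{d ≤ N/l} f'(ld)
∑_{q ≤ (N+h)/l, (q,d)=1} g'(lq) ⋅ #{m ≤ N/(ld) : m ≡ d⁻¹(−h/l) (mod q)}`. -/
theorem shifted_convolution_gathered (f g : ℕ → ℂ) (N h : ℕ)
    (hN : 0 < N) (hh : 0 < h) :
    ∑ n ∈ Finset.Icc 1 N, f n * g (n + h)
      = ∑ l ∈ h.divisors, ∑ d ∈ Finset.Icc 1 (N / l),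
          ∑ q ∈ (Finset.Icc 1 ((N + h) / l)).filter (fun q => Nat.Coprime q d),
            fprime f (l * d) * fprime g (l * q) *
              (((Finset.Icc 1 (N / (l * d))).filter
                  (fun m : ℕ => ((m : ℕ) : ZMod q) = ((d : ZMod q))⁻¹ * (-((h / l : ℕ) : ZMod q)))).card : ℂ) := by
  classical
  set A : Finset (ℕ × ℕ × ℕ) :=
    (Finset.Icc 1 N ×ˢ Finset.Icc 1 N ×ˢ Finset.Icc 1 (N + h)).filter
      (fun p => p.2.1 ∣ p.1 ∧ p.2.2 ∣ p.1 + h) with hAdef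
  set B : Finset (ℕ × ℕ × ℕ × ℕ) :=
    (h.divisors ×ˢ Finset.Icc 1 N ×ˢ Finset.Icc 1 (N + h) ×ˢ Finset.Icc 1 N).filter
      (fun p => p.2.1 ≤ N / p.1 ∧ ((p.2.2.1 ≤ (N + h) / p.1 ∧ Nat.Coprime p.2.2.1 p.2.1) ∧
        (p.2.2.2 ≤ N / (p.1 * p.2.1) ∧
          ((p.2.2.2 : ℕ) : ZMod p.2.2.1) =
            ((p.2.1 : ZMod p.2.2.1))⁻¹ * (-((h / p.1 : ℕ) : ZMod p.2.2.1))))) with hBdef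
  have hL : ∑ n ∈ Finset.Icc 1 N, f n * g (n + h)
      = ∑ p ∈ A, fprime f p.2.1 * fprime g p.2.2 := by
    rw [hAdef, Finset.sum_filter, Finset.sum_product]
    refine Finset.sum_congr rfl fun n hn => ?_
    rw [Finset.sum_product]
    simp only [Finset.mem_Icc] at hn
    have hn1 : 0 < n := hn.1
    rw [← sum_fprime f hn1, ← sum_fprime g (show 0 < n + h by omega),
      divisors_eq_filter (M := N) hn1 hn.2,
      divisors_eq_filter (M := N + h) (show 0 < n + h by omega) (by omega),
      Finset.sum_filter, Finset.sum_filter, Finset.sum_mul_sum]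
    refine Finset.sum_congr rfl fun D _ => Finset.sum_congr rfl fun Q _ => ?_
    by_cases h3 : D ∣ n <;> by_cases h4 : Q ∣ n + h <;> simp [h3, h4]
  have hR : (∑ l ∈ h.divisors, ∑ d ∈ Finset.Icc 1 (N / l),
          ∑ q ∈ (Finset.Icc 1 ((N + h) / l)).filter (fun q => Nat.Coprime q d),
            fprime f (l * d) * fprime g (l * q) *
              (((Finset.Icc 1 (N / (l * d))).filter
                  (fun m : ℕ => ((m : ℕ) : ZMod q) = ((d : ZMod q))⁻¹ * (-((h / l : ℕ) : ZMod q)))).card : ℂ))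
      = ∑ p ∈ B, fprime f (p.1 * p.2.1) * fprime g (p.1 * p.2.2.1) := by
    rw [hBdef, Finset.sum_filter, Finset.sum_product]
    refine Finset.sum_congr rfl fun l hl => ?_
    rw [Finset.sum_product]
    rw [Icc_one_eq_filter (Nat.div_le_self N l), Finset.sum_filter]
    refine Finset.sum_congr rfl fun d hd => ?_
    rw [Finset.sum_product]
    by_cases hdl : d ≤ N / l
    · rw [if_pos hdl]
      rw [Icc_one_eq_filter (Nat.div_le_self (N + h) l), Finset.filter_filter,
        Finset.sum_filter]
      refine Finset.sum_congr rfl fun q hq => ?_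
      dsimp only
      by_cases hq' : q ≤ (N + h) / l ∧ Nat.Coprime q d
      · rw [if_pos hq', ← Finset.sum_filter, Finset.sum_const, nsmul_eq_mul]
        conv_rhs => rw [mul_comm]
        congr 3
        ext a
        simp only [Finset.mem_filter, Finset.mem_Icc]
        constructor
        · rintro ⟨⟨ha1, ha2⟩, ha4⟩
          exact ⟨⟨ha1, le_trans ha2 (Nat.div_le_self _ _)⟩, hdl, hq', ha2, ha4⟩
        · rintro ⟨⟨ha1, -⟩, -, -, ha2, ha4⟩
          exact ⟨⟨ha1, ha2⟩, ha4⟩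
      · rw [if_neg hq']
        refine (Finset.sum_eq_zero fun x hx => ?_).symm
        rw [if_neg]
        exact fun hC => hq' hC.2.1
    · rw [if_neg hdl]
      refine (Finset.sum_eq_zero fun q _ => Finset.sum_eq_zero fun m _ => ?_).symm
      dsimp only
      rw [if_neg]
      exact fun hC => hdl hC.1
  rw [hL, hR]
  refine Finset.sum_nbij' (fun p => (Nat.gcd p.2.1 p.2.2, p.2.1 / Nat.gcd p.2.1 p.2.2,
      p.2.2 / Nat.gcd p.2.1 p.2.2, p.1 / p.2.1))
    (fun p => (p.1 * p.2.1 * p.2.2.2, p.1 * p.2.1, p.1 * p.2.2.1)) ?_ ?_ ?_ ?_ ?_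
  · -- forward membership
    rintro ⟨n, D, Q⟩ hp
    simp only [hAdef, Finset.mem_filter, Finset.mem_product, Finset.mem_Icc] at hp
    obtain ⟨⟨⟨hn1, hnN⟩, ⟨hD1, hDN⟩, hQ1, hQN⟩, hDn, hQn⟩ := hp
    dsimp only
    have hlD : Nat.gcd D Q ∣ D := Nat.gcd_dvd_left D Q
    have hlQ : Nat.gcd D Q ∣ Q := Nat.gcd_dvd_right D Q
    have hL0 : 0 < Nat.gcd D Q := Nat.gcd_pos_of_pos_left Q hD1
    have hDle : D ≤ N := le_trans (Nat.le_of_dvd hn1 hDn) hnN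
    have hQle : Q ≤ N + h := le_trans (Nat.le_of_dvd (by omega) hQn) (by omega)
    have hLh : Nat.gcd D Q ∣ h := by
      have h2 := Nat.dvd_sub (hlQ.trans hQn) (hlD.trans hDn)
      simpa using h2
    have hld : Nat.gcd D Q * (D / Nat.gcd D Q) = D := Nat.mul_div_cancel' hlD
    have hlq : Nat.gcd D Q * (Q / Nat.gcd D Q) = Q := Nat.mul_div_cancel' hlQ
    have hd0 : 0 < D / Nat.gcd D Q := Nat.div_pos (Nat.le_of_dvd hD1 hlD) hL0
    have hq0 : 0 < Q / Nat.gcd D Q := Nat.div_pos (Nat.le_of_dvd hQ1 hlQ) hL0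
    have hm0 : 0 < n / D := Nat.div_pos (Nat.le_of_dvd hn1 hDn) hD1
    have hco : Nat.Coprime (Q / Nat.gcd D Q) (D / Nat.gcd D Q) :=
      (Nat.coprime_div_gcd_div_gcd hL0).symm
    have hDm : D * (n / D) = n := Nat.mul_div_cancel' hDn
    simp only [hBdef, Finset.mem_filter, Finset.mem_product, Finset.mem_Icc, Nat.mem_divisors]
    refine ⟨⟨⟨hLh, hh.ne'⟩, ⟨hd0, le_trans (Nat.div_le_self _ _) hDle⟩,
      ⟨hq0, le_trans (Nat.div_le_self _ _) hQle⟩, hm0,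
      le_trans (Nat.div_le_self _ _) hnN⟩, ?_, ⟨?_, hco⟩, ?_, ?_⟩
    · rw [Nat.le_div_iff_mul_le hL0, mul_comm, hld]; exact hDle
    · rw [Nat.le_div_iff_mul_le hL0, mul_comm, hlq]; exact hQle
    · rw [hld]; exact Nat.div_le_div_right hnN
    · rw [cong_iff_dvd hq0 hco]
      have heq : Nat.gcd D Q * (D / Nat.gcd D Q * (n / D) + h / Nat.gcd D Q) = n + h := by
        rw [Nat.mul_add, Nat.mul_div_cancel' hLh, ← Nat.mul_assoc, hld, hDm]
      refine (Nat.mul_dvd_mul_iff_left hL0).mp ?_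
      rw [heq, hlq]
      exact hQn
  · -- backward membership
    rintro ⟨l, d, q, m⟩ hp
    simp only [hBdef, Finset.mem_filter, Finset.mem_product, Finset.mem_Icc,
      Nat.mem_divisors] at hp
    obtain ⟨⟨⟨hlh, -⟩, ⟨hd1, hdN⟩, ⟨hq1, hqN⟩, hm1, hmN⟩, hdl, ⟨hql, hco⟩, hml, hcong⟩ := hp
    have hl0 : 0 < l := Nat.pos_of_dvd_of_pos hlh hh
    have hld0 : 0 < l * d := Nat.mul_pos hl0 hd1
    dsimp only
    simp only [hAdef, Finset.mem_filter, Finset.mem_product, Finset.mem_Icc]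
    have hn_le : l * d * m ≤ N := by
      have h2 := (Nat.le_div_iff_mul_le hld0).mp hml
      rwa [mul_comm] at h2
    have hD_le : l * d ≤ N := by
      have h2 := (Nat.le_div_iff_mul_le hl0).mp hdl
      rwa [mul_comm] at h2
    have hQ_le : l * q ≤ N + h := by
      have h2 := (Nat.le_div_iff_mul_le hl0).mp hql
      rwa [mul_comm] at h2
    refine ⟨⟨⟨Nat.mul_pos hld0 hm1, hn_le⟩, ⟨hld0, hD_le⟩, Nat.mul_pos hl0 hq1, hQ_le⟩,
      dvd_mul_right _ _, ?_⟩
    have hcd : q ∣ d * m + h / l := (cong_iff_dvd hq1 hco).mp hcong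
    have h2 : l * q ∣ l * (d * m + h / l) := Nat.mul_dvd_mul_left l hcd
    have heq : l * (d * m + h / l) = l * d * m + h := by
      rw [Nat.mul_add, Nat.mul_div_cancel' hlh, Nat.mul_assoc]
    rwa [heq] at h2
  · -- left inverse
    rintro ⟨n, D, Q⟩ hp
    simp only [hAdef, Finset.mem_filter, Finset.mem_product, Finset.mem_Icc] at hp
    obtain ⟨⟨⟨hn1, -⟩, ⟨hD1, -⟩, hQ1, -⟩, hDn, hQn⟩ := hp
    have hld : Nat.gcd D Q * (D / Nat.gcd D Q) = D := Nat.mul_div_cancel' (Nat.gcd_dvd_left D Q)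
    have hlq : Nat.gcd D Q * (Q / Nat.gcd D Q) = Q := Nat.mul_div_cancel' (Nat.gcd_dvd_right D Q)
    dsimp only
    simp only [Prod.mk.injEq]
    refine ⟨?_, hld, hlq⟩
    rw [hld]
    exact Nat.mul_div_cancel' hDn
  · -- right inverse
    rintro ⟨l, d, q, m⟩ hp
    simp only [hBdef, Finset.mem_filter, Finset.mem_product, Finset.mem_Icc,
      Nat.mem_divisors] at hp
    obtain ⟨⟨⟨hlh, -⟩, ⟨hd1, -⟩, ⟨hq1, -⟩, hm1, -⟩, hdl, ⟨hql, hco⟩, hml, hcong⟩ := hp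
    have hl0 : 0 < l := Nat.pos_of_dvd_of_pos hlh hh
    have hld0 : 0 < l * d := Nat.mul_pos hl0 hd1
    have hgcd : Nat.gcd (l * d) (l * q) = l := by
      rw [Nat.gcd_mul_left, Nat.Coprime.gcd_eq_one hco.symm, Nat.mul_one]
    dsimp only
    simp only [Prod.mk.injEq]
    exact ⟨hgcd, by rw [hgcd]; exact Nat.mul_div_cancel_left d hl0,
      by rw [hgcd]; exact Nat.mul_div_cancel_left q hl0, Nat.mul_div_cancel_left m hld0⟩
  · -- terms agree
    rintro ⟨n, D, Q⟩ hp
    simp only [hAdef, Finset.mem_filter, Finset.mem_product, Finset.mem_Icc] at hp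
    dsimp only
    rw [Nat.mul_div_cancel' (Nat.gcd_dvd_left D Q), Nat.mul_div_cancel' (Nat.gcd_dvd_right D Q)]
end
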